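/- A connected graph G is a 3-leaf power if and only if its critical clique graph C(G) is a tree. -/

import Mathlib

open SimpleGraph

/-- `b` is a leaf of `T`: it has at most one neighbour. -/
def IsTreeLeaf {β : Type} (T : SimpleGraph β) (b : β) : Prop :=
  ∀ c d, T.Adj b c → T.Adj b d → c = d

/-- `G` is a `k`-leaf power: there is a tree `T` whose set of leaves is exactly the
(injective) image of the vertex set of `G`, with two vertices adjacent in `G` iff the
corresponding leaves are at distance at most `k` in `T`. -/
def IsKLeafPower {V : Type} (k : ℕ) (G : SimpleGraph V) : Prop :=
  ∃ (β : Type) (T : SimpleGraph β) (f : V → β), T.IsTree ∧ Function.Injective f ∧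
    (∀ b, IsTreeLeaf T b ↔ b ∈ Set.range f) ∧
    (∀ u v, G.Adj u v ↔ (u ≠ v ∧ T.dist (f u) (f v) ≤ k))

/-- `K` is a clique which is a module of `G`. -/
def IsCliqueModule {V : Type*} (G : SimpleGraph V) (K : Set V) : Prop :=
  G.IsClique K ∧ ∀ x ∈ K, ∀ y ∈ K, ∀ z ∉ K, (G.Adj x z ↔ G.Adj y z)

/-- A critical clique of `G`: a maximal clique module. -/
def IsCriticalClique {V : Type*} (G : SimpleGraph V) (K : Set V) : Prop :=
  K.Nonempty ∧ IsCliqueModule G K ∧ ∀ K', IsCliqueModule G K' → K ⊆ K' → K' = K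

/-- The critical clique graph `C(G)`: vertices are the critical cliques of `G`, two of
them being adjacent iff all edges between them are present in `G`. -/
def critCliqueGraph {V : Type*} (G : SimpleGraph V) :
    SimpleGraph {K : Set V // IsCriticalClique G K} where
  Adj K K' := K ≠ K' ∧ ∀ x ∈ K.1, ∀ y ∈ K'.1, G.Adj x y
  symm := ⟨fun _ _ h => ⟨h.1.symm, fun x hx y hy => (h.2 y hy x hx).symm⟩⟩
  loopless := ⟨fun _ h => h.1 rfl⟩

namespace ThreeLeafAux

variable {V : Type} {G : SimpleGraph V}

/-- Closed neighbourhood. -/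
def nbhd (G : SimpleGraph V) (v : V) : Set V := {w | w = v ∨ G.Adj v w}

lemma self_mem_nbhd (v : V) : v ∈ nbhd G v := Or.inl rfl

lemma mem_nbhd_of_adj {v w : V} (h : G.Adj v w) : w ∈ nbhd G v := Or.inr h

lemma adj_of_mem_nbhd {v w : V} (h : w ∈ nbhd G v) (hne : w ≠ v) : G.Adj v w :=
  h.resolve_left hne

/-- The "critical clique class" of `v` : all vertices with the same closed nbhd. -/
def cls (G : SimpleGraph V) (v : V) : Set V := {u | nbhd G u = nbhd G v}

lemma mem_cls_self (v : V) : v ∈ cls G v := rfl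

lemma nbhd_eq_of_mem_cls {u v : V} (h : u ∈ cls G v) : nbhd G u = nbhd G v := h

lemma cls_eq_of_mem {u v : V} (h : u ∈ cls G v) : cls G u = cls G v := by
  ext w
  simp only [cls, Set.mem_setOf_eq, nbhd_eq_of_mem_cls h]

lemma isCliqueModule_cls (v : V) : IsCliqueModule G (cls G v) := by
  constructor
  · intro a ha b hb hne
    have hmem : b ∈ nbhd G a := by
      rw [nbhd_eq_of_mem_cls ha, ← nbhd_eq_of_mem_cls hb]
      exact self_mem_nbhd b
    exact adj_of_mem_nbhd hmem (Ne.symm hne)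
  · intro x hx y hy z hz
    have hzx : z ≠ x := fun h => hz (h ▸ hx)
    have hzy : z ≠ y := fun h => hz (h ▸ hy)
    constructor
    · intro h
      have hmem : z ∈ nbhd G y := by
        rw [nbhd_eq_of_mem_cls hy, ← nbhd_eq_of_mem_cls hx]
        exact mem_nbhd_of_adj h
      exact adj_of_mem_nbhd hmem hzy
    · intro h
      have hmem : z ∈ nbhd G x := by
        rw [nbhd_eq_of_mem_cls hx, ← nbhd_eq_of_mem_cls hy]
        exact mem_nbhd_of_adj h
      exact adj_of_mem_nbhd hmem hzx

lemma isCriticalClique_cls (v : V) : IsCriticalClique G (cls G v) := by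
  refine ⟨⟨v, mem_cls_self v⟩, isCliqueModule_cls v, ?_⟩
  intro K' hK' hsub
  have hv : v ∈ K' := hsub (mem_cls_self v)
  refine Set.Subset.antisymm ?_ hsub
  intro z hz
  show nbhd G z = nbhd G v
  ext w
  show (w = z ∨ G.Adj z w) ↔ (w = v ∨ G.Adj v w)
  by_cases hw : w ∈ K'
  · constructor
    · intro _
      rcases eq_or_ne w v with h | h
      · exact Or.inl h
      · exact Or.inr (hK'.1 hv hw (Ne.symm h))
    · intro _
      rcases eq_or_ne w z with h | h
      · exact Or.inl h
      · exact Or.inr (hK'.1 hz hw (Ne.symm h))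
  · have hwz : w ≠ z := fun h => hw (h ▸ hz)
    have hwv : w ≠ v := fun h => hw (h ▸ hv)
    constructor
    · rintro (h | h)
      · exact absurd h hwz
      · exact Or.inr ((hK'.2 z hz v hv w hw).mp h)
    · rintro (h | h)
      · exact absurd h hwv
      · exact Or.inr ((hK'.2 z hz v hv w hw).mpr h)

lemma critClique_eq_cls {K : Set V} (hK : IsCriticalClique G K) {v : V} (hv : v ∈ K) :
    K = cls G v := by
  have hsub : K ⊆ cls G v := by
    intro u hu
    show nbhd G u = nbhd G v
    ext w
    show (w = u ∨ G.Adj u w) ↔ (w = v ∨ G.Adj v w)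
    by_cases hw : w ∈ K
    · constructor
      · intro _
        rcases eq_or_ne w v with h | h
        · exact Or.inl h
        · exact Or.inr (hK.2.1.1 hv hw (Ne.symm h))
      · intro _
        rcases eq_or_ne w u with h | h
        · exact Or.inl h
        · exact Or.inr (hK.2.1.1 hu hw (Ne.symm h))
    · have hwu : w ≠ u := fun h => hw (h ▸ hu)
      have hwv : w ≠ v := fun h => hw (h ▸ hv)
      constructor
      · rintro (h | h)
        · exact absurd h hwu
        · exact Or.inr ((hK.2.1.2 u hu v hv w hw).mp h)
      · rintro (h | h)
        · exact absurd h hwv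
        · exact Or.inr ((hK.2.1.2 u hu v hv w hw).mpr h)
  exact (hK.2.2 _ (isCliqueModule_cls v) hsub).symm

lemma allAdj {u v : V} (h : G.Adj u v) (hne : cls G u ≠ cls G v) :
    ∀ a ∈ cls G u, ∀ b ∈ cls G v, G.Adj a b := by
  intro a ha b hb
  have hvu : v ∉ cls G u := fun hmem => hne ((cls_eq_of_mem hmem).symm ▸ rfl)
  have hav : G.Adj a v := ((isCliqueModule_cls u).2 a ha u (mem_cls_self u) v hvu).mpr h
  have hab' : a ∉ cls G v := fun hmem => hne ((cls_eq_of_mem ha).symm.trans (cls_eq_of_mem hmem))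
  have hba : G.Adj b a := ((isCliqueModule_cls v).2 b hb v (mem_cls_self v) a hab').mpr hav.symm
  exact hba.symm


lemma mem_nbhd_iff {v w : V} : w ∈ nbhd G v ↔ (w = v ∨ G.Adj v w) := Iff.rfl

lemma cls_eq_of_nbhd {u v : V} (h : nbhd G u = nbhd G v) : cls G u = cls G v := by
  ext w
  simp only [cls, Set.mem_setOf_eq, h]

def ccv (G : SimpleGraph V) (v : V) : {K : Set V // IsCriticalClique G K} :=
  ⟨cls G v, isCriticalClique_cls v⟩

lemma critAdj {u v : V} (h : G.Adj u v) (hne : ccv G u ≠ ccv G v) :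
    (critCliqueGraph G).Adj (ccv G u) (ccv G v) :=
  ⟨hne, allAdj h (fun he => hne (Subtype.ext he))⟩

lemma reachable_ccv {u v : V} (w : G.Walk u v) :
    (critCliqueGraph G).Reachable (ccv G u) (ccv G v) := by
  induction w with
  | nil => exact Reachable.refl _
  | @cons a b c h q ih =>
    by_cases he : ccv G a = ccv G b
    · exact he ▸ ih
    · exact ((critAdj h he).reachable).trans ih

lemma crit_connected (hG : G.Connected) : (critCliqueGraph G).Connected := by
  obtain ⟨v₀⟩ := hG.nonempty
  have : Nonempty {K : Set V // IsCriticalClique G K} := ⟨ccv G v₀⟩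
  refine ⟨fun K K' => ?_⟩
  obtain ⟨u, hu⟩ := K.2.1
  obtain ⟨v, hv⟩ := K'.2.1
  have hK : K = ccv G u := Subtype.ext (critClique_eq_cls K.2 hu)
  have hK' : K' = ccv G v := Subtype.ext (critClique_eq_cls K'.2 hv)
  rw [hK, hK']
  exact (hG.preconnected u v).elim fun w => reachable_ccv w

lemma cycle_start_two_nbrs {β : Type} {B : SimpleGraph β} {x : β} {c : B.Walk x x}
    (hc : c.IsCycle) : ∃ y z : β, y ≠ z ∧ B.Adj x y ∧ B.Adj x z := by
  cases c with
  | nil => exact absurd hc Walk.IsCycle.not_of_nil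
  | @cons _ b _ h p =>
    obtain ⟨zz, q, h', heq⟩ := Walk.exists_cons_eq_concat h p
    refine ⟨b, zz, ?_, h, h'.symm⟩
    intro hbz
    subst hbz
    have hlen : 3 ≤ (Walk.cons h p).length := hc.three_le_length
    have hedges : (s(x, b) :: p.edges : List (Sym2 β)) = q.edges ++ [s(b, x)] := by
      calc (s(x, b) :: p.edges : List (Sym2 β)) = (Walk.cons h p).edges := (Walk.edges_cons h p).symm
        _ = (q.concat h').edges := by rw [heq]
        _ = q.edges ++ [s(b, x)] := by rw [Walk.edges_concat, List.concat_eq_append]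
    have hnd : ((Walk.cons h p).edges).Nodup := hc.isCircuit.isTrail.edges_nodup
    rw [Walk.edges_cons] at hnd
    have hnotmem : s(x, b) ∉ p.edges := (List.nodup_cons.mp hnd).1
    cases hq : q.edges with
    | nil =>
      rw [hq] at hedges
      simp only [List.nil_append] at hedges
      have hl : p.length = 0 := by
        have := congrArg List.length hedges
        simpa [Walk.length_edges] using this
      simp [Walk.length_cons, hl] at hlen
    | cons e es =>
      rw [hq] at hedges
      rw [List.cons_append] at hedges
      injection hedges with h1 h2
      have hmem : s(b, x) ∈ p.edges := by rw [h2]; simp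
      rw [Sym2.eq_swap] at hmem
      exact hnotmem hmem

/-- The tree for the backward direction: critical cliques as internal nodes,
vertices of `G` as pendant leaves. -/
def auxT (G : SimpleGraph V) : SimpleGraph ({K : Set V // IsCriticalClique G K} ⊕ V) where
  Adj x y := match x, y with
    | .inl K, .inl K' => (critCliqueGraph G).Adj K K'
    | .inl K, .inr v => v ∈ K.1
    | .inr v, .inl K => v ∈ K.1
    | .inr _, .inr _ => False
  symm := by
    constructor
    rintro (K | v) (K' | w) h
    · exact ⟨h.1.symm, fun a ha b hb => (h.2 b hb a ha).symm⟩
    · exact h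
    · exact h
    · exact h
  loopless := by
    constructor
    rintro (K | v) h
    · exact h.1 rfl
    · exact h

lemma auxT_adj_inr {v : V} {y : _ ⊕ V} (h : (auxT G).Adj (Sum.inr v) y) :
    y = Sum.inl (ccv G v) := by
  cases y with
  | inl K =>
    have hv : v ∈ K.1 := h
    exact congrArg Sum.inl (Subtype.ext (critClique_eq_cls K.2 hv))
  | inr w => exact absurd h (fun h => h)

/-- The inclusion hom from the critical clique graph into `auxT`. -/
def inlHom (G : SimpleGraph V) : critCliqueGraph G →g auxT G :=
  ⟨Sum.inl, fun {a b} h => h⟩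

lemma decode_aux : ∀ {x y : {K : Set V // IsCriticalClique G K} ⊕ V}
    (w : (auxT G).Walk x y)
    (_ : ∀ z ∈ w.support, ∃ L, z = Sum.inl L)
    (K K' : {K : Set V // IsCriticalClique G K}) (hx : x = Sum.inl K) (hy : y = Sum.inl K'),
    ∃ w' : (critCliqueGraph G).Walk K K', w'.map (inlHom G) = w.copy hx hy := by
  intro x y w
  induction w with
  | nil =>
    intro hw K K' hx hy
    subst hx
    injection hy with hKK'
    subst hKK'
    exact ⟨Walk.nil, by simp; rfl⟩
  | @cons a b c h q ih =>
    intro hw K K' hx hy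
    subst hx
    subst hy
    obtain ⟨L, hL⟩ := hw b (by simp [Walk.support_cons, q.start_mem_support])
    subst hL
    have hC : (critCliqueGraph G).Adj K L := h
    obtain ⟨q', hq'⟩ := ih (fun z hz => hw z (by rw [Walk.support_cons]; exact List.mem_cons_of_mem _ hz)) L K' rfl rfl
    rw [Walk.copy_rfl_rfl] at hq'
    exact ⟨Walk.cons hC q', by rw [Walk.copy_rfl_rfl, Walk.map_cons, hq']; rfl⟩

lemma auxT_acyclic (hC : (critCliqueGraph G).IsAcyclic) : (auxT G).IsAcyclic := by
  intro x c hc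
  haveI := Classical.decEq ({K : Set V // IsCriticalClique G K} ⊕ V)
  have hsup : ∀ y ∈ c.support, ∃ L, y = Sum.inl L := by
    intro y hy
    obtain ⟨a, b, hab, ha, hb⟩ := cycle_start_two_nbrs (hc.rotate hy)
    cases y with
    | inl L => exact ⟨L, rfl⟩
    | inr v => exact absurd ((auxT_adj_inr ha).trans (auxT_adj_inr hb).symm) hab
  obtain ⟨K, hK⟩ := hsup x c.start_mem_support
  subst hK
  obtain ⟨c', hc'⟩ := decode_aux c hsup K K rfl rfl
  rw [Walk.copy_rfl_rfl] at hc'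
  have hinj : Function.Injective (inlHom G) := fun a b hab => Sum.inl.inj hab
  have : c'.IsCycle := (Walk.map_isCycle_iff_of_injective hinj).mp (hc' ▸ hc)
  exact hC c' this

lemma auxT_connected (hCc : (critCliqueGraph G).Connected) : (auxT G).Connected := by
  have : Nonempty ({K : Set V // IsCriticalClique G K} ⊕ V) := ⟨Sum.inl hCc.nonempty.some⟩
  refine ⟨fun x y => ?_⟩
  have step : ∀ z : {K : Set V // IsCriticalClique G K} ⊕ V,
      ∃ K, (auxT G).Reachable z (Sum.inl K) := by
    rintro (K | v)
    · exact ⟨K, Reachable.refl _⟩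
    · exact ⟨ccv G v, Adj.reachable (show v ∈ (ccv G v).1 from mem_cls_self v)⟩
  obtain ⟨K, hK⟩ := step x
  obtain ⟨K', hK'⟩ := step y
  refine hK.trans (Reachable.trans ?_ hK'.symm)
  exact (hCc.preconnected K K').map (inlHom G)

lemma short_walk_adj {x y : {K : Set V // IsCriticalClique G K} ⊕ V}
    (w : (auxT G).Walk x y) : ∀ {u v : V}, x = Sum.inr u → y = Sum.inr v → u ≠ v →
    w.length ≤ 3 → G.Adj u v := by
  cases w with
  | nil =>
    intro u v hx hy hne _
    rw [hx] at hy
    exact absurd (Sum.inr.inj hy) hne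
  | @cons _ b _ h q =>
    cases q with
    | nil =>
      intro u v hx hy hne _
      subst hx; subst hy
      exact absurd h (fun h => h)
    | @cons _ c _ h2 r =>
      cases r with
      | nil =>
        intro u v hx hy hne _
        subst hx; subst hy
        cases b with
        | inl K =>
          have hu : u ∈ K.1 := h
          have hv : v ∈ K.1 := h2
          exact K.2.2.1.1 hu hv hne
        | inr w' => exact absurd h (fun h => h)
      | @cons _ d _ h3 s =>
        cases s with
        | nil =>
          intro u v hx hy hne _
          subst hx; subst hy
          cases b with
          | inr w' => exact absurd h (fun h => h)
          | inl K =>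
            cases c with
            | inr w' => exact absurd h3 (fun h => h)
            | inl K' =>
              have hCA : (critCliqueGraph G).Adj K K' := h2
              exact hCA.2 u h v h3
        | cons h4 t =>
          intro u v hx hy hne hlen
          simp [Walk.length_cons] at hlen
          omega

lemma auxT_adj_inl_inl {K K' : {K : Set V // IsCriticalClique G K}} :
    (auxT G).Adj (Sum.inl K) (Sum.inl K') ↔ (critCliqueGraph G).Adj K K' := Iff.rfl

lemma auxT_adj_inl_inr {K : {K : Set V // IsCriticalClique G K}} {v : V} :
    (auxT G).Adj (Sum.inl K) (Sum.inr v) ↔ v ∈ K.1 := Iff.rfl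

lemma auxT_adj_inr_inl {K : {K : Set V // IsCriticalClique G K}} {v : V} :
    (auxT G).Adj (Sum.inr v) (Sum.inl K) ↔ v ∈ K.1 := Iff.rfl

lemma backward (hG : G.Connected) (hT : (critCliqueGraph G).IsTree) : IsKLeafPower 3 G := by
  obtain ⟨v₁⟩ := hG.nonempty
  by_cases hsing : ∀ u v : V, u = v
  · refine ⟨PUnit, ⊥, fun _ => PUnit.unit, ⟨?_, isAcyclic_bot⟩, fun a b _ => hsing a b, ?_, ?_⟩
    · haveI : Nonempty PUnit := ⟨PUnit.unit⟩
      exact ⟨fun a b => by cases a; cases b; exact Reachable.refl _⟩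
    · intro b
      constructor
      · intro _; exact ⟨v₁, by cases b; rfl⟩
      · intro _ c d hc _; exact absurd hc (fun h => h.elim)
    · intro u v
      constructor
      · intro h; exact absurd (hsing u v) h.ne
      · rintro ⟨hne, _⟩; exact absurd (hsing u v) hne
  · push_neg at hsing
    obtain ⟨u₀, w₀, hne₀⟩ := hsing
    have hTc : (auxT G).Connected := auxT_connected hT.isConnected
    refine ⟨{K : Set V // IsCriticalClique G K} ⊕ V, auxT G, Sum.inr,
      ⟨hTc, auxT_acyclic hT.IsAcyclic⟩, fun a b h => Sum.inr.inj h, ?_, ?_⟩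
    · intro b
      constructor
      · intro hb
        cases b with
        | inr v => exact ⟨v, rfl⟩
        | inl K =>
          exfalso
          obtain ⟨v, hv⟩ := K.2.1
          by_cases h2 : ∃ u ∈ K.1, u ≠ v
          · obtain ⟨u, hu, huv⟩ := h2
            exact huv (Sum.inr.inj (hb (Sum.inr u) (Sum.inr v)
              (auxT_adj_inl_inr.mpr hu) (auxT_adj_inl_inr.mpr hv)))
          · push_neg at h2
            have ha : ∃ a : V, a ∉ K.1 := by
              by_contra hall
              push_neg at hall
              exact hne₀ ((h2 u₀ (hall u₀)).trans (h2 w₀ (hall w₀)).symm)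
            obtain ⟨a, haK⟩ := ha
            have hKa : K ≠ ccv G a := by
              intro h
              apply haK
              rw [h]
              exact mem_cls_self a
            obtain ⟨w⟩ := hT.isConnected.preconnected K (ccv G a)
            cases w with
            | nil => exact hKa rfl
            | @cons _ L _ hadj q =>
              exact Sum.inl_ne_inr (hb (Sum.inl L) (Sum.inr v)
                (auxT_adj_inl_inl.mpr hadj) (auxT_adj_inl_inr.mpr hv))
      · rintro ⟨v, rfl⟩
        intro c d hc hd
        rw [auxT_adj_inr hc, auxT_adj_inr hd]
    · intro u v
      constructor
      · intro h
        refine ⟨h.ne, ?_⟩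
        by_cases hcc : cls G u = cls G v
        · have h1 : (auxT G).Adj (Sum.inr u) (Sum.inl (ccv G u)) :=
            auxT_adj_inr_inl.mpr (mem_cls_self u)
          have h2 : (auxT G).Adj (Sum.inl (ccv G u)) (Sum.inr v) :=
            auxT_adj_inl_inr.mpr (show v ∈ cls G u from hcc ▸ mem_cls_self v)
          refine le_trans (dist_le (Walk.cons h1 (Walk.cons h2 Walk.nil))) ?_
          simp
        · have hccv : ccv G u ≠ ccv G v := fun h => hcc (congrArg Subtype.val h)
          have h1 : (auxT G).Adj (Sum.inr u) (Sum.inl (ccv G u)) :=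
            auxT_adj_inr_inl.mpr (mem_cls_self u)
          have h2 : (auxT G).Adj (Sum.inl (ccv G u)) (Sum.inl (ccv G v)) :=
            auxT_adj_inl_inl.mpr (critAdj h hccv)
          have h3 : (auxT G).Adj (Sum.inl (ccv G v)) (Sum.inr v) :=
            auxT_adj_inl_inr.mpr (mem_cls_self v)
          refine le_trans (dist_le (Walk.cons h1 (Walk.cons h2 (Walk.cons h3 Walk.nil)))) ?_
          simp
      · rintro ⟨hne, hdist⟩
        obtain ⟨w, hwl⟩ :=
          (hTc.preconnected (Sum.inr u) (Sum.inr v)).exists_walk_length_eq_dist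
        exact short_walk_adj w rfl rfl hne (hwl.le.trans hdist)

lemma forward (hG : G.Connected) (hLP : IsKLeafPower 3 G) : (critCliqueGraph G).IsTree := by
  obtain ⟨β, T, f, hT, hf, hleaf, hadj⟩ := hLP
  refine ⟨crit_connected hG, ?_⟩
  by_cases hcomp : ∀ u v : V, u ≠ v → G.Adj u v
  · -- complete graph: a single critical clique
    have hnuniv : ∀ u : V, nbhd G u = Set.univ := by
      intro u
      ext w
      simp only [Set.mem_univ, iff_true]
      rcases eq_or_ne w u with rfl | h
      · exact mem_nbhd_iff.mpr (Or.inl rfl)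
      · exact mem_nbhd_iff.mpr (Or.inr (hcomp u w (Ne.symm h)))
    have hone : ∀ K K' : {K : Set V // IsCriticalClique G K}, K = K' := by
      intro K K'
      obtain ⟨u, hu⟩ := K.2.1
      obtain ⟨v, hv⟩ := K'.2.1
      have h1 : K.1 = cls G u := critClique_eq_cls K.2 hu
      have h2 : K'.1 = cls G v := critClique_eq_cls K'.2 hv
      have : cls G u = cls G v := cls_eq_of_nbhd ((hnuniv u).trans (hnuniv v).symm)
      exact Subtype.ext (h1.trans (this.trans h2.symm))
    intro x c hc
    cases c with
    | nil => exact Walk.IsCycle.not_of_nil hc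
    | cons h q => exact h.1 (hone _ _)
  · push_neg at hcomp
    obtain ⟨a, b, hab, hnadj⟩ := hcomp
    have hfab : f a ≠ f b := fun h => hab (hf h)
    have hlf : ∀ u : V, IsTreeLeaf T (f u) := fun u => (hleaf (f u)).mpr ⟨u, rfl⟩
    have hnbr : ∀ u : V, ∃ y, T.Adj (f u) y := by
      intro u
      obtain ⟨t, ht⟩ : ∃ t, t ≠ f u := by
        rcases eq_or_ne (f u) (f a) with h | h
        · exact ⟨f b, by rw [h]; exact hfab.symm⟩
        · exact ⟨f a, h.symm⟩
      obtain ⟨w⟩ := hT.isConnected.preconnected (f u) t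
      have hnn : ¬ w.Nil := Walk.not_nil_of_ne (Ne.symm ht)
      exact ⟨w.getVert 1, w.adj_snd hnn⟩
    choose p hp using hnbr
    have hpu : ∀ u y, T.Adj (f u) y → y = p u := fun u y hy => hlf u y (p u) hy (hp u)
    -- no two leaves of T are adjacent
    have hll : ∀ u w : V, ¬ T.Adj (f u) (f w) := by
      intro u w hadj'
      have confine : ∀ {s x : β} (wk : T.Walk s x),
          (s = f u ∨ s = f w) → (x = f u ∨ x = f w) := by
        intro s x wk
        induction wk with
        | nil => exact fun h => h
        | @cons s' b' x' h q ih =>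
          intro hs
          rcases hs with hs | hs
          · subst hs
            exact ih (Or.inr (hlf u b' (f w) h hadj'))
          · subst hs
            exact ih (Or.inl (hlf w b' (f u) h hadj'.symm))
      have hdab : T.dist (f a) (f b) ≤ 3 := by
        have ha' : f a = f u ∨ f a = f w :=
          (hT.isConnected.preconnected (f u) (f a)).elim fun wk => confine wk (Or.inl rfl)
        have hb' : f b = f u ∨ f b = f w :=
          (hT.isConnected.preconnected (f u) (f b)).elim fun wk => confine wk (Or.inl rfl)
        have hT' : T.Adj (f a) (f b) := by
          rcases ha' with h1 | h1 <;> rcases hb' with h2 | h2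
          · exact absurd (h1.trans h2.symm) hfab
          · rw [h1, h2]; exact hadj'
          · rw [h1, h2]; exact hadj'.symm
          · exact absurd (h1.trans h2.symm) hfab
        exact le_trans (dist_le (Walk.cons hT' Walk.nil)) (by simp)
      exact hnadj ((hadj a b).mpr ⟨hab, hdab⟩)
    -- analysis of short walks between leaves
    have walk_analysis : ∀ {x y : β} (w : T.Walk x y) {u v : V}, x = f u → y = f v →
        u ≠ v → w.length ≤ 3 → (p u = p v ∨ T.Adj (p u) (p v)) := by
      intro x y w
      cases w with
      | nil =>
        intro u v hx hy hne _
        rw [hx] at hy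
        exact absurd (hf hy) hne
      | @cons _ b' _ h q =>
        cases q with
        | nil =>
          intro u v hx hy hne _
          subst hx; subst hy
          exact absurd h (hll u v)
        | @cons _ c' _ h2 r =>
          cases r with
          | nil =>
            intro u v hx hy hne _
            subst hx; subst hy
            exact Or.inl ((hpu u b' h).symm.trans (hpu v b' h2.symm))
          | @cons _ d' _ h3 s =>
            cases s with
            | nil =>
              intro u v hx hy hne _
              subst hx; subst hy
              rw [← hpu u b' h, ← hpu v c' h3.symm]
              exact Or.inr h2
            | cons h4 t =>
              intro u v hx hy hne hlen
              simp [Walk.length_cons] at hlen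
              omega
    have hcrit3' : ∀ {u v : V}, (p u = p v ∨ T.Adj (p u) (p v)) →
        T.dist (f u) (f v) ≤ 3 := by
      intro u v h
      rcases h with h | h
      · have h2 : T.Adj (p u) (f v) := h ▸ (hp v).symm
        exact le_trans (dist_le (Walk.cons (hp u) (Walk.cons h2 Walk.nil))) (by simp)
      · exact le_trans
          (dist_le (Walk.cons (hp u) (Walk.cons h (Walk.cons (hp v).symm Walk.nil)))) (by simp)
    have hGp : ∀ {u v : V}, G.Adj u v ↔ (u ≠ v ∧ (p u = p v ∨ T.Adj (p u) (p v))) := by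
      intro u v
      constructor
      · intro h
        obtain ⟨hne, hd⟩ := (hadj u v).mp h
        obtain ⟨w, hwl⟩ := (hT.isConnected.preconnected (f u) (f v)).exists_walk_length_eq_dist
        exact ⟨hne, walk_analysis w rfl rfl hne (hwl.le.trans hd)⟩
      · rintro ⟨hne, h⟩
        exact (hadj u v).mpr ⟨hne, hcrit3' h⟩
    have hclsp : ∀ {u v : V}, p u = p v → cls G u = cls G v := by
      intro u v hpv
      rcases eq_or_ne u v with rfl | hne
      · rfl
      apply cls_eq_of_nbhd
      ext w
      rw [mem_nbhd_iff, mem_nbhd_iff]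
      constructor
      · rintro (rfl | h)
        · exact Or.inr (hGp.mpr ⟨Ne.symm hne, Or.inl hpv.symm⟩)
        · rcases eq_or_ne w v with rfl | hwv
          · exact Or.inl rfl
          · obtain ⟨hnuw, h2⟩ := hGp.mp h
            exact Or.inr (hGp.mpr ⟨Ne.symm hwv, hpv ▸ h2⟩)
      · rintro (rfl | h)
        · exact Or.inr (hGp.mpr ⟨hne, Or.inl hpv⟩)
        · rcases eq_or_ne w u with rfl | hwu
          · exact Or.inl rfl
          · obtain ⟨hnvw, h2⟩ := hGp.mp h
            exact Or.inr (hGp.mpr ⟨Ne.symm hwu, hpv.symm ▸ h2⟩)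
    have hrepex : ∀ K : {K : Set V // IsCriticalClique G K}, ∃ x, x ∈ K.1 := fun K => K.2.1
    choose rep hrep using hrepex
    have hKrep : ∀ K : {K : Set V // IsCriticalClique G K}, K.1 = cls G (rep K) :=
      fun K => critClique_eq_cls K.2 (hrep K)
    have hQinj : Function.Injective (fun K : {K : Set V // IsCriticalClique G K} => p (rep K)) := by
      intro K K' h
      exact Subtype.ext ((hKrep K).trans ((hclsp h).trans (hKrep K').symm))
    let QHom : critCliqueGraph G →g T :=
      ⟨fun K => p (rep K), by
        intro K K' hA
        have hxy : G.Adj (rep K) (rep K') := hA.2 (rep K) (hrep K) (rep K') (hrep K')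
        have hpne : p (rep K) ≠ p (rep K') := fun h => hA.1 (hQinj h)
        exact ((hGp.mp hxy).2).resolve_left hpne⟩
    intro x c hc
    exact hT.IsAcyclic (c.map QHom) ((Walk.map_isCycle_iff_of_injective hQinj).mpr hc)

end ThreeLeafAux

theorem threeLeafPower_iff_critCliqueGraph_isTree {V : Type} (G : SimpleGraph V)
    (hG : G.Connected) :
    IsKLeafPower 3 G ↔ (critCliqueGraph G).IsTree :=
  ⟨fun h => ThreeLeafAux.forward hG h, fun h => ThreeLeafAux.backward hG h⟩
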